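/- For the discrete-time dynamic unicycle model, no input sequence can achieve exponential decay with state-norm exponent q > 1/2: for all positive reals r, q, λ, μ with 1/2 < q ≤ 1, there exists ε ∈ (0, r) such that for every input sequence u : ℕ → ℝ², the solution x : ℕ → ℝ⁵ of the unicycle dynamics with initial state (0, ε, 0, 0, 0) violates the bound ‖x(t)‖ ≤ ‖x(0)‖^q · λ · e^{−μt} at some time t = τ ∈ ℕ. -/

import Mathlib

open Real

lemma coord_le_norm (y : EuclideanSpace ℝ (Fin 5)) (i : Fin 5) : |y i| ≤ ‖y‖ := by
  rw [EuclideanSpace.norm_eq, ← Real.sqrt_sq_eq_abs]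
  refine Real.sqrt_le_sqrt ?_
  have h : y i ^ 2 = ‖y i‖ ^ 2 := by rw [Real.norm_eq_abs, sq_abs]
  rw [h]
  exact Finset.single_le_sum (f := fun j => ‖y j‖ ^ 2) (fun j _ => sq_nonneg _) (Finset.mem_univ i)

lemma geom_bound {a : ℝ} (h0 : 0 ≤ a) (h1 : a < 1) (n : ℕ) :
    ∑ i ∈ Finset.range n, a ^ i ≤ 1 / (1 - a) := by
  have h2 : (0:ℝ) < 1 - a := by linarith
  rw [geom_sum_eq (by linarith), ← neg_div_neg_eq]
  simp only [neg_sub]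
  have := pow_nonneg h0 n
  gcongr
  linarith

/-- The discrete-time dynamic unicycle model: `x` is a solution with input `u`. -/
def UnicycleSol (m J k κ h : ℝ) (u : ℕ → ℝ × ℝ)
    (x : ℕ → EuclideanSpace ℝ (Fin 5)) : Prop :=
  ∀ t : ℕ,
    x (t + 1) 0 = x t 0 + h * x t 3 * Real.cos (x t 2) ∧
    x (t + 1) 1 = x t 1 + h * x t 3 * Real.sin (x t 2) ∧
    x (t + 1) 2 = x t 2 + h * x t 4 ∧
    x (t + 1) 3 = x t 3 + (h / m) * ((u t).1 - k * x t 3) ∧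
    x (t + 1) 4 = x t 4 + (h / J) * ((u t).2 - κ * x t 4)

/-- no input sequence achieves exponential decay with exponent `q > 1/2`. -/
theorem unicycle_no_exponential_stability
    (m J k κ h : ℝ) (hm : 0 < m) (hJ : 0 < J) (hk : 0 < k) (hκ : 0 < κ) (hh : 0 < h)
    (r q lam mu : ℝ) (hr : 0 < r) (hq : 1 / 2 < q) (hq1 : q ≤ 1)
    (hlam : 0 < lam) (hmu : 0 < mu) :
    ∃ ε ∈ Set.Ioo (0 : ℝ) r,
      ∀ (u : ℕ → ℝ × ℝ) (x : ℕ → EuclideanSpace ℝ (Fin 5)),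
        UnicycleSol m J k κ h u x →
        x 0 0 = 0 → x 0 1 = ε → x 0 2 = 0 → x 0 3 = 0 → x 0 4 = 0 →
        ∃ τ : ℕ, ¬ (‖x τ‖ ≤ ‖x 0‖ ^ q * lam * Real.exp (-mu * τ)) := by
  set A : ℝ := h * lam ^ 2 with hA
  have hApos : 0 < A := by positivity
  set a : ℝ := Real.exp (-(2 * mu)) with ha
  have ha0 : 0 < a := Real.exp_pos _
  have ha1 : a < 1 := by
    rw [ha, Real.exp_lt_one_iff]; linarith
  set D : ℝ := 1 - a with hD
  have hDpos : 0 < D := by simp [hD]; linarith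
  set c : ℝ := D / (2 * A) with hc
  have hcpos : 0 < c := by positivity
  have hqq : 0 < 2 * q - 1 := by linarith
  set ε : ℝ := min (r / 2) (c ^ (1 / (2 * q - 1))) with he
  have hεpos : 0 < ε := lt_min (by linarith) (Real.rpow_pos_of_pos hcpos _)
  have hεr : ε < r := lt_of_le_of_lt (min_le_left _ _) (by linarith)
  -- key smallness: ε ^ (2q - 1) ≤ c
  have hkey : ε ^ (2 * q - 1) ≤ c := by
    have h1 : ε ≤ c ^ (1 / (2 * q - 1)) := min_le_right _ _
    have h2 := Real.rpow_le_rpow (le_of_lt hεpos) h1 (le_of_lt hqq)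
    rwa [← Real.rpow_mul (le_of_lt hcpos), one_div_mul_cancel (ne_of_gt hqq),
      Real.rpow_one] at h2
  refine ⟨ε, ⟨hεpos, hεr⟩, ?_⟩
  intro u x hsol h0 h1 h2 h3 h4
  by_contra hcon
  push_neg at hcon
  -- norm of initial state
  have hnorm0 : ‖x 0‖ = ε := by
    rw [EuclideanSpace.norm_eq, Fin.sum_univ_five, h0, h1, h2, h3, h4]
    simp [Real.norm_eq_abs, abs_of_pos hεpos]
    rw [Real.sqrt_sq (le_of_lt hεpos)]
  rw [hnorm0] at hcon
  -- squared norm bound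
  have hsq : ∀ t : ℕ, ‖x t‖ ^ 2 ≤ ε ^ (2 * q) * lam ^ 2 * a ^ t := by
    intro t
    have h1 := hcon t
    have hxn : 0 ≤ ‖x t‖ := norm_nonneg _
    have := mul_self_le_mul_self hxn h1
    have heps : ε ^ q * ε ^ q = ε ^ (2 * q) := by
      rw [← Real.rpow_add hεpos]; ring_nf
    have he2 : Real.exp (-mu * t) * Real.exp (-mu * t) = a ^ t := by
      rw [← Real.exp_add, ha, ← Real.exp_nat_mul]; congr 1; ring
    calc ‖x t‖ ^ 2 = ‖x t‖ * ‖x t‖ := by ring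
      _ ≤ (ε ^ q * lam * Real.exp (-mu * t)) * (ε ^ q * lam * Real.exp (-mu * t)) := this
      _ = ε ^ (2 * q) * lam ^ 2 * a ^ t := by rw [← heps, ← he2]; ring
  -- one-step drop bound on coordinate 1
  have hstep : ∀ t : ℕ, x (t + 1) 1 ≥ x t 1 - A * ε ^ (2 * q) * a ^ t := by
    intro t
    have hdyn := (hsol t).2.1
    have hb3 : |x t 3| ≤ ‖x t‖ := coord_le_norm _ _
    have hb2 : |x t 2| ≤ ‖x t‖ := coord_le_norm _ _
    have hsin : |Real.sin (x t 2)| ≤ |x t 2| := Real.abs_sin_le_abs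
    have habs : |h * x t 3 * Real.sin (x t 2)| ≤ h * ‖x t‖ ^ 2 := by
      rw [abs_mul, abs_mul, abs_of_pos hh]
      calc h * |x t 3| * |Real.sin (x t 2)| ≤ h * ‖x t‖ * ‖x t‖ := by
            apply mul_le_mul
            · exact mul_le_mul_of_nonneg_left hb3 (le_of_lt hh)
            · exact le_trans hsin hb2
            · exact abs_nonneg _
            · positivity
        _ = h * ‖x t‖ ^ 2 := by ring
    have h2 : h * ‖x t‖ ^ 2 ≤ A * ε ^ (2 * q) * a ^ t := by
      calc h * ‖x t‖ ^ 2 ≤ h * (ε ^ (2 * q) * lam ^ 2 * a ^ t) :=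
            mul_le_mul_of_nonneg_left (hsq t) (le_of_lt hh)
        _ = A * ε ^ (2 * q) * a ^ t := by rw [hA]; ring
    have := abs_le.mp (le_trans habs h2)
    rw [hdyn]
    linarith [this.1]
  -- inductive lower bound
  have hlow : ∀ t : ℕ, x t 1 ≥ ε - A * ε ^ (2 * q) * ∑ s ∈ Finset.range t, a ^ s := by
    intro t
    induction t with
    | zero => simp [h1]
    | succ n ih =>
      have := hstep n
      rw [Finset.sum_range_succ]
      have hnn : 0 ≤ A * ε ^ (2 * q) := by positivity
      nlinarith
  -- conclude : x t 1 ≥ ε/2 for all t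
  have hhalf : ∀ t : ℕ, x t 1 ≥ ε / 2 := by
    intro t
    have h1' := hlow t
    have h2' : A * ε ^ (2 * q) * ∑ s ∈ Finset.range t, a ^ s ≤ A * ε ^ (2 * q) * (1 / D) := by
      apply mul_le_mul_of_nonneg_left (geom_bound (le_of_lt ha0) ha1 t) (by positivity)
    have h3' : A * ε ^ (2 * q) * (1 / D) ≤ ε / 2 := by
      have hsplit : ε ^ (2 * q) = ε ^ (2 * q - 1) * ε := by
        have hx : ε ^ (2 * q - 1) * ε ^ (1 : ℝ) = ε ^ (2 * q) := by
          rw [← Real.rpow_add hεpos]; norm_num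
        rw [← hx, Real.rpow_one]
      rw [hsplit]
      have : A * (ε ^ (2 * q - 1) * ε) * (1 / D) ≤ A * (c * ε) * (1 / D) := by
        have := mul_le_mul_of_nonneg_right hkey (le_of_lt hεpos)
        have h' : A * (ε ^ (2 * q - 1) * ε) ≤ A * (c * ε) :=
          mul_le_mul_of_nonneg_left this (le_of_lt hApos)
        exact mul_le_mul_of_nonneg_right h' (by positivity)
      refine le_trans this (le_of_eq ?_)
      rw [hc]
      field_simp
    linarith
  -- now pick τ large to contradict decay
  set B : ℝ := 2 * ε ^ q * lam / ε with hB
  have hBpos : 0 < B := by positivity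
  obtain ⟨n, hn⟩ := exists_nat_ge (B / mu)
  have hexp : B < Real.exp (mu * n) := by
    have h1' : B ≤ mu * n := by
      rw [div_le_iff₀ hmu] at hn; linarith [hn]
    have := Real.add_one_le_exp (mu * n)
    linarith
  have hdecay : ε ^ q * lam * Real.exp (-mu * n) < ε / 2 := by
    rw [neg_mul, Real.exp_neg]
    rw [mul_inv_lt_iff₀ (Real.exp_pos _)]
    have : ε / 2 * Real.exp (mu * ↑n) > ε / 2 * B := by
      exact mul_lt_mul_of_pos_left hexp (by positivity)
    have hBe : ε / 2 * B = ε ^ q * lam := by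
      rw [hB]; field_simp
    linarith
  have := hcon n
  have := hhalf n
  have := le_trans (le_abs_self _) (coord_le_norm (x n) 1)
  linarith
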